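/- For every T ∈ B(H), the spectral propagation of T with respect to (C₀(X), L_d) equals the classical propagation of T. Consequently, the norm closure of the set of locally compact operators of finite spectral propagation coincides with the norm closure of the set of locally compact operators of finite classical propagation (the Roe algebra C*(X)). -/

import Mathlib

open scoped ZeroAtInfty BoundedContinuousFunction ENNReal NNReal

noncomputable section RoePreamble

/-- Post-composition of a real bounded continuous function with the inclusion `ℝ → ℂ`. -/
def toComplexBCF {X : Type*} [TopologicalSpace X] (f : X →ᵇ ℝ) : X →ᵇ ℂ :=
  f.comp Complex.ofReal Complex.isometry_ofReal.lipschitz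

variable {X : Type*} [MetricSpace X]
variable {H : Type*} [NormedAddCommGroup H] [InnerProductSpace ℂ H] [CompleteSpace H]

section Rep

/- `ρ` plays the role of the canonical extension `ρ̄` to `C_b(X)` of a representation of
`C₀(X)` on `H`; the representation itself is its restriction `g ↦ ρ g.toBCF` to `C₀(X)`. -/
variable (ρ : (X →ᵇ ℂ) →⋆ₐ[ℂ] (H →L[ℂ] H))

/-- The restriction of `ρ` to `C₀(X)` is faithful. -/
def RepFaithful : Prop :=
  Function.Injective fun g : C₀(X, ℂ) => ρ g.toBCF

/-- The restriction of `ρ` to `C₀(X)` is nondegenerate: `ρ(C₀(X)) H` spans a dense subspace. -/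
def RepNondegenerate : Prop :=
  (Submodule.span ℂ {η : H | ∃ (g : C₀(X, ℂ)) (ξ : H), η = ρ g.toBCF ξ}).topologicalClosure = ⊤

/-- The distance between two subsets of `X`, as an extended nonnegative real. -/
def setEDist (s t : Set X) : ℝ≥0∞ := ⨅ x ∈ s, EMetric.infEdist x t

/-- `T` has (classical) propagation at most `R`: `ρ̄(f) T ρ̄(g) = 0` whenever
`d(supp f, supp g) > R`. -/
def HasClassPropLE (T : H →L[ℂ] H) (R : ℝ) : Prop :=
  ∀ f g : X →ᵇ ℂ, ENNReal.ofReal R < setEDist (tsupport ⇑f) (tsupport ⇑g) →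
    ρ f * T * ρ g = 0

/-- The (classical) propagation of `T`. -/
def classPropagation (T : H →L[ℂ] H) : ℝ≥0∞ :=
  ⨅ (R : ℝ≥0) (_ : HasClassPropLE ρ T R), (R : ℝ≥0∞)

/-- `T` is locally compact: `ρ(g) T` and `T ρ(g)` are compact for every `g ∈ C₀(X)`. -/
def LocallyCompactOp (T : H →L[ℂ] H) : Prop :=
  ∀ g : C₀(X, ℂ), IsCompactOperator ⇑(ρ g.toBCF * T) ∧ IsCompactOperator ⇑(T * ρ g.toBCF)

/-- `C` is an upper bound for the Lipschitz commutant seminorm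
`L*(T) = sup {‖[T, ρ̄ f]‖ : f ∈ C_b(X) real-valued and 1-Lipschitz}`. -/
def LipCommBound (T : H →L[ℂ] H) (C : ℝ) : Prop :=
  ∀ f : X →ᵇ ℝ, LipschitzWith 1 ⇑f →
    ‖T * ρ (toComplexBCF f) - ρ (toComplexBCF f) * T‖ ≤ C

end Rep

end RoePreamble

noncomputable section SpectralProjections

variable {H : Type*} [NormedAddCommGroup H] [InnerProductSpace ℂ H] [CompleteSpace H]

/-- The closed subspace of vectors whose spectral measure (for the self-adjoint operator `a`)
is supported in the closed set `S`. -/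
def spectralSubspace (a : H →L[ℂ] H) (S : Set ℝ) : Submodule ℂ H :=
  (⨅ g : {g : ℝ → ℝ // Continuous g ∧ ∀ x ∈ S, g x = 0},
    LinearMap.ker ((cfc (g : ℝ → ℝ) a : H →L[ℂ] H) : H →ₗ[ℂ] H)).topologicalClosure

instance (a : H →L[ℂ] H) (S : Set ℝ) : CompleteSpace (spectralSubspace a S) :=
  (Submodule.isClosed_topologicalClosure _).completeSpace_coe

/-- The spectral projection `χ_{(-∞, r]}(a)`. -/
def specProjIic (a : H →L[ℂ] H) (r : ℝ) : H →L[ℂ] H :=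
  (spectralSubspace a (Set.Iic r)).subtypeL ∘L (spectralSubspace a (Set.Iic r)).orthogonalProjection

/-- The spectral projection `χ_{(r, ∞)}(a)`. -/
def specProjIoi (a : H →L[ℂ] H) (r : ℝ) : H →L[ℂ] H := 1 - specProjIic a r

end SpectralProjections

noncomputable section

variable {X : Type*} [MetricSpace X] [ProperSpace X]
variable {H : Type*} [NormedAddCommGroup H] [InnerProductSpace ℂ H] [CompleteSpace H]
variable (ρ : (X →ᵇ ℂ) →⋆ₐ[ℂ] (H →L[ℂ] H))

/-- `T` has spectral propagation at most `R` with respect to `(C₀(X), L_d)`: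
for every self-adjoint `a = g + c·1` in the unitization of `C₀(X)` with Lipschitz seminorm
`L_d(a) ≤ 1` (i.e. `g` real-valued and `1`-Lipschitz), `χ_{(−∞,0]}(a) T χ_{(R,∞)}(a) = 0`. -/
def HasSpecPropLE_Lip (T : H →L[ℂ] H) (R : ℝ) : Prop :=
  ∀ (g : C₀(X, ℝ)) (c : ℝ), LipschitzWith 1 ⇑g →
    specProjIic (ρ (toComplexBCF g.toBCF) + (c : ℂ) • 1) 0 * T *
      specProjIoi (ρ (toComplexBCF g.toBCF) + (c : ℂ) • 1) R = 0

/-- The spectral propagation of `T` with respect to `(C₀(X), L_d)`. -/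
def specPropagation_Lip (T : H →L[ℂ] H) : ℝ≥0∞ :=
  ⨅ (R : ℝ≥0) (_ : HasSpecPropLE_Lip ρ T R), (R : ℝ≥0∞)

/- ===================== AUXILIARY MATERIAL ===================== -/

section AuxBCF

variable {X : Type*} [MetricSpace X]

@[simp] lemma toComplexBCF_apply (f : X →ᵇ ℝ) (x : X) : toComplexBCF f x = (f x : ℂ) := rfl

lemma isSelfAdjoint_toComplexBCF (f : X →ᵇ ℝ) : IsSelfAdjoint (toComplexBCF f) := by
  ext x
  show star ((f x : ℂ)) = (f x : ℂ)
  exact Complex.conj_ofReal _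

private lemma compBCF_bound (φ : ℝ → ℝ) (hφ : Continuous φ) (a : X →ᵇ ℝ) :
    ∃ C, ∀ t ∈ Set.Icc (-‖a‖) ‖a‖, ‖φ t‖ ≤ C :=
  (isCompact_Icc (a := -‖a‖) (b := ‖a‖)).exists_bound_of_continuousOn hφ.continuousOn

/-- composition of a continuous function with a bounded continuous function -/
noncomputable def compBCF (φ : ℝ → ℝ) (hφ : Continuous φ) (a : X →ᵇ ℝ) : X →ᵇ ℝ :=
  BoundedContinuousFunction.ofNormedAddCommGroup (fun x => φ (a x))
    (hφ.comp a.continuous) (Classical.choose (compBCF_bound φ hφ a))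
    (fun x => Classical.choose_spec (compBCF_bound φ hφ a) (a x)
      (by
        have := a.norm_coe_le_norm x
        rw [Real.norm_eq_abs] at this
        exact ⟨neg_le_of_abs_le this, le_of_abs_le this⟩))

@[simp] lemma compBCF_apply (φ : ℝ → ℝ) (hφ : Continuous φ) (a : X →ᵇ ℝ) (x : X) :
    compBCF φ hφ a x = φ (a x) := rfl

/-- evaluation at a point, as a star algebra homomorphism -/
def evalSAH (x : X) : (X →ᵇ ℂ) →⋆ₐ[ℂ] ℂ where
  toFun f := f x
  map_one' := rfl
  map_mul' _ _ := rfl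
  map_zero' := rfl
  map_add' _ _ := rfl
  commutes' _ := rfl
  map_star' _ := rfl

lemma continuous_evalSAH (x : X) : Continuous (evalSAH (X := X) x) :=
  (BoundedContinuousFunction.lipschitz_eval_const x).continuous

instance : ContinuousFunctionalCalculus ℝ (X →ᵇ ℂ) IsSelfAdjoint :=
  IsSelfAdjoint.instContinuousFunctionalCalculus

lemma cfc_toComplexBCF (a : X →ᵇ ℝ) (φ : ℝ → ℝ) (hφ : Continuous φ) :
    cfc φ (toComplexBCF a) = toComplexBCF (compBCF φ hφ a) := by
  ext x
  have h := StarAlgHomClass.map_cfc (R := ℝ) (evalSAH x) φ (toComplexBCF a)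
    hφ.continuousOn (continuous_evalSAH x) (isSelfAdjoint_toComplexBCF a)
    ((isSelfAdjoint_toComplexBCF a).map (evalSAH x))
  have hx : (evalSAH x) (toComplexBCF a) = algebraMap ℝ ℂ (a x) := rfl
  have h2 : (evalSAH x) (cfc φ (toComplexBCF a)) = algebraMap ℝ ℂ (φ (a x)) := by
    rw [h, hx, cfc_algebraMap]
  simpa using (show (cfc φ (toComplexBCF a)) x = algebraMap ℝ ℂ (φ (a x)) from h2)

lemma tsupport_star_eq (u : X →ᵇ ℂ) : tsupport ⇑(star u) = tsupport ⇑u := by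
  have h : Function.support ⇑(star u) = Function.support ⇑u := by
    ext x
    simp [Function.mem_support]
  rw [tsupport, tsupport, h]

end AuxBCF

section AuxSpectral

variable {H : Type*} [NormedAddCommGroup H] [InnerProductSpace ℂ H] [CompleteSpace H]

lemma spectralSubspace_eq (a : H →L[ℂ] H) (S : Set ℝ) :
    spectralSubspace a S = ⨅ g : {g : ℝ → ℝ // Continuous g ∧ ∀ x ∈ S, g x = 0},
      LinearMap.ker ((cfc (g : ℝ → ℝ) a : H →L[ℂ] H) : H →ₗ[ℂ] H) := by
  refine IsClosed.submodule_topologicalClosure_eq ?_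
  have h : ((⨅ g : {g : ℝ → ℝ // Continuous g ∧ ∀ x ∈ S, g x = 0},
      LinearMap.ker ((cfc (g : ℝ → ℝ) a : H →L[ℂ] H) : H →ₗ[ℂ] H) : Submodule ℂ H) : Set H) =
      ⋂ g : {g : ℝ → ℝ // Continuous g ∧ ∀ x ∈ S, g x = 0},
        (LinearMap.ker ((cfc (g : ℝ → ℝ) a : H →L[ℂ] H) : H →ₗ[ℂ] H) : Set H) := by
    simp [Submodule.coe_iInf]
  rw [h]
  exact isClosed_iInter fun g => ContinuousLinearMap.isClosed_ker _

lemma mem_spectralSubspace_iff {a : H →L[ℂ] H} {S : Set ℝ} {ξ : H} :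
    ξ ∈ spectralSubspace a S ↔
      ∀ g : ℝ → ℝ, Continuous g → (∀ x ∈ S, g x = 0) → cfc g a ξ = 0 := by
  rw [spectralSubspace_eq, Submodule.mem_iInf]
  exact ⟨fun h g hg hg0 => h ⟨g, hg, hg0⟩, fun h g => h g.1 g.2.1 g.2.2⟩

@[simp] lemma specProjIic_apply (a : H →L[ℂ] H) (r : ℝ) (v : H) :
    specProjIic a r v = (Submodule.orthogonalProjectionOnto (spectralSubspace a (Set.Iic r)) v : H) := rfl

lemma isSelfAdjoint_specProjIic (a : H →L[ℂ] H) (r : ℝ) : IsSelfAdjoint (specProjIic a r) :=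
  isSelfAdjoint_starProjection _

lemma specProjIic_mul_eq_self {a B : H →L[ℂ] H} {r : ℝ}
    (h : ∀ ξ, B ξ ∈ spectralSubspace a (Set.Iic r)) : specProjIic a r * B = B := by
  ext ξ
  show specProjIic a r (B ξ) = B ξ
  rw [specProjIic_apply]
  exact Submodule.starProjection_eq_self_iff.mpr (h ξ)

lemma mul_specProjIic_eq_zero {a B : H →L[ℂ] H} {r : ℝ}
    (h : ∀ ξ ∈ spectralSubspace a (Set.Iic r), B ξ = 0) : B * specProjIic a r = 0 := by
  ext ξ
  show B (specProjIic a r ξ) = 0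
  rw [specProjIic_apply]
  exact h _ (SetLike.coe_mem _)

lemma specProjIoi_apply (a : H →L[ℂ] H) (r : ℝ) (v : H) :
    specProjIoi a r v = v - specProjIic a r v := by
  simp only [specProjIoi, ContinuousLinearMap.sub_apply, ContinuousLinearMap.one_apply]

/-- the key sandwiching lemma: to prove `χ_{(-∞,0]}(a) T χ_{(R,∞)}(a) = 0` it suffices to
test against `cfc θ a` for continuous `θ` vanishing on `(-∞, R]`. -/
lemma specProj_sandwich {a : H →L[ℂ] H} (T : H →L[ℂ] H) (R : ℝ)
    (h : ∀ θ : ℝ → ℝ, Continuous θ → (∀ t ∈ Set.Iic R, θ t = 0) →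
      specProjIic a 0 * T * cfc θ a = 0) :
    specProjIic a 0 * T * specProjIoi a R = 0 := by
  set U : Submodule ℂ H := spectralSubspace a (Set.Iic R) with hU_def
  set B : H →L[ℂ] H := specProjIic a 0 * T * specProjIoi a R with hB_def
  have hBapp : ∀ x : H, B x = specProjIic a 0 (T (specProjIoi a R x)) := fun x => rfl
  have hselfadj : ∀ (θ : ℝ → ℝ), IsSelfAdjoint (cfc θ a) := fun θ => cfc_predicate θ a
  have hswap : ∀ (θ : ℝ → ℝ) (x y : H),
      (inner ℂ (cfc θ a x) y : ℂ) = inner ℂ x (cfc θ a y) := by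
    intro θ x y
    nth_rewrite 1 [← (hselfadj θ).adjoint_eq]
    exact ContinuousLinearMap.adjoint_inner_left _ y x
  -- B vanishes on U
  have hBU : ∀ ξ ∈ U, B ξ = 0 := by
    intro ξ hξ
    have h1 : specProjIoi a R ξ = 0 := by
      rw [specProjIoi_apply, specProjIic_apply]; exact sub_eq_zero.mpr (Submodule.starProjection_eq_self_iff.mpr hξ).symm
    rw [hBapp, h1, map_zero, map_zero]
  set V : Submodule ℂ H :=
    (Submodule.span ℂ (⋃ θ : {θ : ℝ → ℝ // Continuous θ ∧ ∀ t ∈ Set.Iic R, θ t = 0},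
      Set.range ⇑(cfc θ.1 a))).topologicalClosure with hV_def
  haveI : CompleteSpace V := (Submodule.isClosed_topologicalClosure _).completeSpace_coe
  -- B vanishes on V
  have hBV : ∀ v ∈ V, B v = 0 := by
    intro v hv
    have hker : V ≤ LinearMap.ker (B : H →ₗ[ℂ] H) := by
      refine Submodule.topologicalClosure_minimal _ ?_ (ContinuousLinearMap.isClosed_ker B)
      rw [Submodule.span_le]
      rintro w hw
      simp only [Set.mem_iUnion, Set.mem_range] at hw
      obtain ⟨θ, ξ, rfl⟩ := hw
      have hperp : specProjIic a R (cfc θ.1 a ξ) = 0 := by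
        rw [specProjIic_apply]
        have hmem : cfc θ.1 a ξ ∈ Uᗮ := by
          rw [Submodule.mem_orthogonal]
          intro u hu
          rw [← hswap]
          have hz : cfc θ.1 a u = 0 :=
            mem_spectralSubspace_iff.mp hu θ.1 θ.2.1 θ.2.2
          rw [hz, inner_zero_left]
        rw [Submodule.orthogonalProjectionOnto_eq_zero_iff.mpr hmem]
        rfl
      have h2 : specProjIoi a R (cfc θ.1 a ξ) = cfc θ.1 a ξ := by
        rw [specProjIoi_apply, hperp, sub_zero]
      have h3 := h θ.1 θ.2.1 θ.2.2
      simp only [SetLike.mem_coe, LinearMap.mem_ker]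
      show B (cfc θ.1 a ξ) = 0
      rw [hBapp, h2]
      have h4 := congrFun (congrArg (DFunLike.coe) h3) ξ
      simpa using h4
    exact hker hv
  -- Uᗮ ≤ V
  have hUperp : Uᗮ ≤ V := by
    have hVU : Vᗮ ≤ U := by
      intro ξ hξ
      rw [hU_def, mem_spectralSubspace_iff]
      intro g hg hg0
      have hmem : ∀ w : H, cfc g a w ∈ V := by
        intro w
        refine Submodule.le_topologicalClosure _ (Submodule.subset_span ?_)
        exact Set.mem_iUnion.mpr ⟨⟨g, hg, hg0⟩, Set.mem_range_self w⟩
      have hz : ∀ w : H, (inner ℂ (cfc g a ξ) w : ℂ) = 0 := by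
        intro w
        rw [hswap]
        exact (Submodule.mem_orthogonal' _ _).mp hξ _ (hmem w)
      have := hz (cfc g a ξ)
      rwa [inner_self_eq_zero] at this
    calc Uᗮ ≤ Vᗮᗮ := Submodule.orthogonal_le hVU
    _ = V := Submodule.orthogonal_orthogonal V
  -- conclude
  ext x
  rw [ContinuousLinearMap.zero_apply]
  have hdecomp : x = (U.orthogonalProjectionOnto x : H) + (x - U.orthogonalProjectionOnto x) := by abel
  calc B x = B ((U.orthogonalProjectionOnto x : H) + (x - U.orthogonalProjectionOnto x)) := by
        rw [← hdecomp]
  _ = B (U.orthogonalProjectionOnto x : H) + B (x - U.orthogonalProjectionOnto x) := map_add _ _ _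
  _ = 0 := by
      rw [hBU _ (SetLike.coe_mem _), hBV (x - (U.orthogonalProjectionOnto x : H)) (hUperp (Submodule.sub_starProjection_mem_orthogonal x)),
        add_zero]

end AuxSpectral
section AuxSetEDist

variable {X : Type*} [MetricSpace X]

lemma le_setEDist {s t : Set X} {c : ℝ≥0∞} (h : ∀ x ∈ s, ∀ y ∈ t, c ≤ edist x y) :
    c ≤ setEDist s t :=
  le_iInf₂ fun x hx => EMetric.le_infEdist.mpr (h x hx)

lemma setEDist_le_edist {s t : Set X} {x y : X} (hx : x ∈ s) (hy : y ∈ t) :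
    setEDist s t ≤ edist x y :=
  (iInf₂_le x hx).trans (EMetric.infEdist_le_edist_of_mem hy)

lemma setEDist_anti {s s' t : Set X} (h : s' ⊆ s) : setEDist s t ≤ setEDist s' t :=
  le_iInf₂ fun x hx => iInf₂_le x (h hx)

lemma setEDist_anti_right {s t t' : Set X} (h : t' ⊆ t) : setEDist s t ≤ setEDist s t' :=
  le_iInf₂ fun x hx => le_iInf₂ fun y hy => (iInf₂_le x hx).trans
    (EMetric.infEdist_le_edist_of_mem (h hy))

lemma le_infDist_of {K : Set X} {x : X} {c : ℝ} (hK : K.Nonempty)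
    (h : ∀ z ∈ K, c ≤ dist x z) : c ≤ Metric.infDist x K := by
  haveI := hK.to_subtype
  rw [Metric.infDist_eq_iInf]
  exact le_ciInf fun z => h z z.2

end AuxSetEDist

section AuxRho

variable {X : Type*} [MetricSpace X]
variable {H : Type*} [NormedAddCommGroup H] [InnerProductSpace ℂ H] [CompleteSpace H]
variable (ρ : (X →ᵇ ℂ) →⋆ₐ[ℂ] (H →L[ℂ] H))

lemma continuous_rho : Continuous ρ :=
  AddMonoidHomClass.continuous_of_bound ρ 1
    (fun u => by simpa using NonUnitalStarAlgHom.norm_apply_le ρ u)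

lemma norm_rho_le (u : X →ᵇ ℂ) : ‖ρ u‖ ≤ ‖u‖ :=
  NonUnitalStarAlgHom.norm_apply_le ρ u

lemma rho_cfc (a : X →ᵇ ℝ) (φ : ℝ → ℝ) (hφ : Continuous φ) :
    cfc φ (ρ (toComplexBCF a)) = ρ (toComplexBCF (compBCF φ hφ a)) := by
  rw [← cfc_toComplexBCF a φ hφ]
  exact (StarAlgHomClass.map_cfc (R := ℝ) ρ φ (toComplexBCF a) hφ.continuousOn
    (continuous_rho ρ) (isSelfAdjoint_toComplexBCF a)
    ((isSelfAdjoint_toComplexBCF a).map ρ)).symm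

lemma rho_range_mem (a : X →ᵇ ℝ) (u : X →ᵇ ℂ) {r : ℝ}
    (hsupp : ∀ x ∈ tsupport ⇑u, a x ≤ r) (ξ : H) :
    ρ u ξ ∈ spectralSubspace (ρ (toComplexBCF a)) (Set.Iic r) := by
  rw [mem_spectralSubspace_iff]
  intro g hg hg0
  rw [rho_cfc ρ a g hg, ← ContinuousLinearMap.mul_apply, ← map_mul]
  have hz : toComplexBCF (compBCF g hg a) * u = 0 := by
    ext x
    by_cases hx : u x = 0
    · simp [hx]
    · have hx' : x ∈ tsupport ⇑u := subset_closure (Function.mem_support.mpr hx)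
      have hgax : g (a x) = 0 := hg0 _ (hsupp x hx')
      simp [hgax]
  rw [hz, map_zero, ContinuousLinearMap.zero_apply]

lemma rho_kill (a : X →ᵇ ℝ) (u : X →ᵇ ℂ) {r r' : ℝ} (hrr : r < r')
    (hsupp : ∀ x ∈ tsupport ⇑u, r' ≤ a x) {ξ : H}
    (hξ : ξ ∈ spectralSubspace (ρ (toComplexBCF a)) (Set.Iic r)) : ρ u ξ = 0 := by
  set φ : ℝ → ℝ := fun t => min 1 (max 0 ((t - r) / (r' - r))) with hφ_def
  have hφ : Continuous φ := by fun_prop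
  have h0 : ∀ t ∈ Set.Iic r, φ t = 0 := by
    intro t ht
    have h1 : (t - r) / (r' - r) ≤ 0 :=
      div_nonpos_of_nonpos_of_nonneg (sub_nonpos.mpr ht) (le_of_lt (sub_pos.mpr hrr))
    simp only [hφ_def]
    rw [max_eq_left h1, min_eq_right zero_le_one]
  have h1 : ∀ t, r' ≤ t → φ t = 1 := by
    intro t ht
    have h2 : (1:ℝ) ≤ (t - r) / (r' - r) := (le_div_iff₀ (sub_pos.mpr hrr)).mpr (by linarith)
    have h3 : (0:ℝ) ≤ (t - r) / (r' - r) := le_trans zero_le_one h2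
    simp only [hφ_def]
    rw [max_eq_right h3, min_eq_left h2]
  have hker : ρ (toComplexBCF (compBCF φ hφ a)) ξ = 0 := by
    rw [← rho_cfc ρ a φ hφ]
    exact mem_spectralSubspace_iff.mp hξ φ hφ h0
  have hmul : u * toComplexBCF (compBCF φ hφ a) = u := by
    ext x
    by_cases hx : u x = 0
    · simp [hx]
    · have hx' : x ∈ tsupport ⇑u := subset_closure (Function.mem_support.mpr hx)
      have hax : φ (a x) = 1 := h1 _ (hsupp x hx')
      simp [hax]
  calc ρ u ξ = ρ (u * toComplexBCF (compBCF φ hφ a)) ξ := by rw [hmul]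
  _ = ρ u (ρ (toComplexBCF (compBCF φ hφ a)) ξ) := by
      rw [map_mul]; rfl
  _ = 0 := by rw [hker, map_zero]

lemma rho_mul_specProjIic_self (a : X →ᵇ ℝ) (u : X →ᵇ ℂ) {r : ℝ}
    (hsupp : ∀ x ∈ tsupport ⇑u, a x ≤ r) :
    ρ u * specProjIic (ρ (toComplexBCF a)) r = ρ u := by
  have h1 : specProjIic (ρ (toComplexBCF a)) r * ρ (star u) = ρ (star u) :=
    specProjIic_mul_eq_self (fun ξ =>
      rho_range_mem ρ a (star u) (by rw [tsupport_star_eq]; exact hsupp) ξ)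
  have h2 := congrArg star h1
  rwa [star_mul, ← map_star, star_star, (isSelfAdjoint_specProjIic _ _).star_eq] at h2

lemma specProjIic_mul_rho_zero (a : X →ᵇ ℝ) (u : X →ᵇ ℂ) {r r' : ℝ} (hrr : r < r')
    (hsupp : ∀ x ∈ tsupport ⇑u, r' ≤ a x) :
    specProjIic (ρ (toComplexBCF a)) r * ρ u = 0 := by
  have h1 : ρ (star u) * specProjIic (ρ (toComplexBCF a)) r = 0 :=
    mul_specProjIic_eq_zero (fun ξ hξ =>
      rho_kill ρ a (star u) hrr (by rw [tsupport_star_eq]; exact hsupp) hξ)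
  have h2 := congrArg star h1
  rwa [star_mul, ← map_star, star_star, (isSelfAdjoint_specProjIic _ _).star_eq, star_zero] at h2

end AuxRho
section AuxDirections

variable {X : Type*} [MetricSpace X]
variable {H : Type*} [NormedAddCommGroup H] [InnerProductSpace ℂ H] [CompleteSpace H]
variable (ρ : (X →ᵇ ℂ) →⋆ₐ[ℂ] (H →L[ℂ] H))

lemma hasSpec_of_hasClass {T : H →L[ℂ] H} {R R' : ℝ} (hR : 0 ≤ R) (hRR' : R < R')
    (hclass : HasClassPropLE ρ T R) : HasSpecPropLE_Lip ρ T R' := by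
  intro g c hLip
  set a : X →ᵇ ℝ := g.toBCF + BoundedContinuousFunction.const X c with ha_def
  have haapp : ∀ x, a x = g x + c := fun x => by
    simp [ha_def]
  have haeq : ρ (toComplexBCF g.toBCF) + (c : ℂ) • 1 = ρ (toComplexBCF a) := by
    have h1 : toComplexBCF a = toComplexBCF g.toBCF + (c : ℂ) • 1 := by
      ext x
      simp only [toComplexBCF_apply, haapp, BoundedContinuousFunction.coe_add,
        BoundedContinuousFunction.coe_smul, Pi.add_apply, Pi.smul_apply,
        BoundedContinuousFunction.coe_one, Pi.one_apply, smul_eq_mul, mul_one]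
      push_cast
      rfl
    rw [h1, map_add, map_smul, map_one]
  rw [haeq]
  have hLipa : LipschitzWith 1 ⇑a := by
    refine LipschitzWith.of_dist_le_mul fun x y => ?_
    rw [haapp, haapp]
    have h2 : dist (g x + c) (g y + c) = dist (g x) (g y) := dist_add_right _ _ _
    rw [h2]
    simpa using hLip.dist_le_mul x y
  apply specProj_sandwich
  intro θ hθ hθ0
  rw [rho_cfc ρ a θ hθ]
  set ε : ℝ := (R' - R) / 2 with hε_def
  have hε : 0 < ε := by simp [hε_def]; linarith
  set ψ : ℝ → ℝ := fun t => min 1 (max 0 (1 - t / ε)) with hψ_def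
  have hψc : Continuous ψ := by fun_prop
  have hψ1 : ∀ t ≤ 0, ψ t = 1 := by
    intro t ht
    have h1 : (1:ℝ) ≤ 1 - t / ε := by
      have : t / ε ≤ 0 := div_nonpos_of_nonpos_of_nonneg ht hε.le
      linarith
    simp only [hψ_def]
    rw [max_eq_right (le_trans zero_le_one h1), min_eq_left h1]
  have hψ0 : ∀ t, ε ≤ t → ψ t = 0 := by
    intro t ht
    have h1 : 1 - t / ε ≤ 0 := by
      have : (1:ℝ) ≤ t / ε := (one_le_div hε).mpr ht
      linarith
    simp only [hψ_def]
    rw [max_eq_left h1, min_eq_right zero_le_one]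
  set ψ' : ℝ → ℝ := fun t => 1 - ψ t with hψ'_def
  have hψ'c : Continuous ψ' := by fun_prop
  set A := ρ (toComplexBCF a) with hA_def
  set Pψ := ρ (toComplexBCF (compBCF ψ hψc a)) with hPψ_def
  set Pψ' := ρ (toComplexBCF (compBCF ψ' hψ'c a)) with hPψ'_def
  -- the two cutoffs sum to one
  have hsum : Pψ + Pψ' = 1 := by
    rw [hPψ_def, hPψ'_def, ← map_add, ← map_one ρ]
    congr 1
    ext x
    simp only [BoundedContinuousFunction.coe_add, Pi.add_apply, toComplexBCF_apply,
      compBCF_apply, BoundedContinuousFunction.coe_one, Pi.one_apply, hψ'_def]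
    push_cast
    ring
  -- the P0 * Pψ' term vanishes
  have hperp : specProjIic A 0 * Pψ' = 0 := by
    have h1 : Pψ' * specProjIic A 0 = 0 := by
      refine mul_specProjIic_eq_zero fun ξ hξ => ?_
      rw [hPψ'_def, ← rho_cfc ρ a ψ' hψ'c]
      exact mem_spectralSubspace_iff.mp hξ ψ' hψ'c
        (fun t ht => by simp only [hψ'_def]; rw [hψ1 t ht, sub_self])
    have h2 := congrArg star h1
    have hsa : star Pψ' = Pψ' := by
      rw [hPψ'_def, ← map_star]
      congr 1
      exact (isSelfAdjoint_toComplexBCF _)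
    rwa [star_mul, hsa, (isSelfAdjoint_specProjIic _ _).star_eq, star_zero] at h2
  -- the classical propagation kills Pψ * T * ρθ
  have hclassterm : Pψ * T * ρ (toComplexBCF (compBCF θ hθ a)) = 0 := by
    apply hclass
    have hsupp1 : tsupport ⇑(toComplexBCF (compBCF ψ hψc a)) ⊆ {x | a x ≤ ε} := by
      apply closure_minimal
      · intro x hx
        rw [Function.mem_support] at hx
        by_contra hax
        rw [Set.mem_setOf_eq, not_le] at hax
        exact hx (by simp [hψ0 _ hax.le])
      · exact isClosed_le a.continuous continuous_const
    have hsupp2 : tsupport ⇑(toComplexBCF (compBCF θ hθ a)) ⊆ {x | R' ≤ a x} := by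
      apply closure_minimal
      · intro x hx
        rw [Function.mem_support] at hx
        by_contra hax
        rw [Set.mem_setOf_eq, not_le] at hax
        exact hx (by simp [hθ0 (a x) (le_of_lt hax)])
      · exact isClosed_le continuous_const a.continuous
    calc ENNReal.ofReal R < ENNReal.ofReal (R + ε) := by
          rw [ENNReal.ofReal_lt_ofReal_iff (by linarith)]; linarith
    _ ≤ setEDist (tsupport ⇑(toComplexBCF (compBCF ψ hψc a)))
          (tsupport ⇑(toComplexBCF (compBCF θ hθ a))) := by
        refine le_setEDist fun x hx y hy => ?_
        have hax : a x ≤ ε := hsupp1 hx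
        have hay : R' ≤ a y := hsupp2 hy
        have hd : R + ε ≤ dist x y := by
          have h3 : dist (a x) (a y) ≤ dist x y := by simpa using hLipa.dist_le_mul x y
          have h4 : a y - a x ≤ dist (a x) (a y) := by
            rw [Real.dist_eq, abs_sub_comm]
            exact le_abs_self _
          have h5 : R + ε ≤ a y - a x := by
            rw [hε_def] at hax ⊢
            linarith
          linarith
        rw [edist_dist]
        exact ENNReal.ofReal_le_ofReal hd
  -- combine
  calc specProjIic A 0 * T * ρ (toComplexBCF (compBCF θ hθ a))
      = specProjIic A 0 * ((Pψ + Pψ') * T) * ρ (toComplexBCF (compBCF θ hθ a)) := by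
        rw [hsum, one_mul]
  _ = specProjIic A 0 * (Pψ * T * ρ (toComplexBCF (compBCF θ hθ a)))
      + (specProjIic A 0 * Pψ') * (T * ρ (toComplexBCF (compBCF θ hθ a))) := by
        noncomm_ring
  _ = 0 := by rw [hclassterm, hperp, mul_zero, zero_mul, add_zero]

end AuxDirections
section AuxBump

variable {X : Type*} [MetricSpace X]

/-- a bump function equal to `1` on `closedBall x₀ (n-1)` and supported in `closedBall x₀ n` -/
noncomputable def bumpBCF (x₀ : X) (n : ℝ) : X →ᵇ ℝ :=
  BoundedContinuousFunction.ofNormedAddCommGroup (fun x => max 0 (min 1 (n - dist x x₀)))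
    (continuous_const.max (continuous_const.min
      (continuous_const.sub (continuous_id.dist continuous_const)))) 1
    (fun x => by
      rw [Real.norm_eq_abs, abs_le]
      constructor
      · linarith [le_max_left (0:ℝ) (min 1 (n - dist x x₀))]
      · exact max_le zero_le_one (min_le_left _ _))

@[simp] lemma bumpBCF_apply (x₀ : X) (n : ℝ) (x : X) :
    bumpBCF x₀ n x = max 0 (min 1 (n - dist x x₀)) := rfl

lemma bumpBCF_nonneg (x₀ : X) (n : ℝ) (x : X) : 0 ≤ bumpBCF x₀ n x := le_max_left _ _

lemma bumpBCF_le_one (x₀ : X) (n : ℝ) (x : X) : bumpBCF x₀ n x ≤ 1 :=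
  max_le zero_le_one (min_le_left _ _)

lemma bumpBCF_eq_one {x₀ : X} {n : ℝ} {x : X} (h : dist x x₀ ≤ n - 1) :
    bumpBCF x₀ n x = 1 := by
  have h1 : (1:ℝ) ≤ n - dist x x₀ := by linarith
  rw [bumpBCF_apply, min_eq_left h1, max_eq_right zero_le_one]

lemma tsupport_bumpBCF_subset (x₀ : X) (n : ℝ) :
    tsupport ⇑(bumpBCF x₀ n) ⊆ Metric.closedBall x₀ n := by
  apply closure_minimal _ Metric.isClosed_closedBall
  intro x hx
  rw [Function.mem_support] at hx
  by_contra hd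
  rw [Metric.mem_closedBall, not_le] at hd
  exact hx (by
    rw [bumpBCF_apply, min_eq_right (by linarith), max_eq_left (by linarith)])

end AuxBump

section AuxCore

variable {X : Type*} [MetricSpace X] [ProperSpace X]
variable {H : Type*} [NormedAddCommGroup H] [InnerProductSpace ℂ H] [CompleteSpace H]
variable (ρ : (X →ᵇ ℂ) →⋆ₐ[ℂ] (H →L[ℂ] H))

/-- the core of the spectral-to-classical direction: for operators with compactly supported
left cutoff, spectral propagation dominates classical propagation -/
lemma core_spec_to_class {T : H →L[ℂ] H} {R : ℝ} (hspec : HasSpecPropLE_Lip ρ T R)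
    (hR : 0 ≤ R) (k u : X →ᵇ ℂ) (hk : Bornology.IsBounded (tsupport ⇑k))
    (hdist : ENNReal.ofReal R < setEDist (tsupport ⇑k) (tsupport ⇑u)) :
    ρ k * T * ρ u = 0 := by
  set K := tsupport ⇑k with hK_def
  rcases Set.eq_empty_or_nonempty K with hKe | hKne
  · have hk0 : k = 0 := by
      ext x
      exact congrFun (tsupport_eq_empty_iff.mp hKe) x
    rw [hk0, map_zero, zero_mul, zero_mul]
  obtain ⟨x₁, hx₁⟩ := hKne
  -- choose the intermediate radius R''
  obtain ⟨cE, hc1, hc2⟩ := exists_between hdist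
  have hcE_top : cE ≠ ⊤ := ne_top_of_lt hc2
  set R'' : ℝ := cE.toReal with hR''_def
  have hRR'' : R < R'' := (ENNReal.ofReal_lt_iff_lt_toReal hR hcE_top).mp hc1
  have hR''pos : 0 < R'' := lt_of_le_of_lt hR hRR''
  -- the distance function
  set a₀ : X →ᵇ ℝ := BoundedContinuousFunction.ofNormedAddCommGroup
    (fun x => min (Metric.infDist x K) R'')
    ((Metric.continuous_infDist_pt K).min continuous_const) R''
    (fun x => by
      rw [Real.norm_eq_abs, abs_le]
      refine ⟨le_trans (by linarith) (le_min Metric.infDist_nonneg hR''pos.le), min_le_right _ _⟩)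
    with ha₀_def
  have ha₀app : ∀ x, a₀ x = min (Metric.infDist x K) R'' := fun _ => rfl
  -- the C₀ function g₀ = a₀ - R''
  obtain ⟨m, hm⟩ := hk.subset_closedBall x₁
  have hz : ∀ x ∉ Metric.closedBall x₁ (m + R''), a₀ x - R'' = 0 := by
    intro x hx
    rw [Metric.mem_closedBall, not_le] at hx
    have hinf : R'' ≤ Metric.infDist x K := by
      refine le_infDist_of ⟨x₁, hx₁⟩ fun z hz => ?_
      have h1 : dist z x₁ ≤ m := Metric.mem_closedBall.mp (hm hz)
      have h2 : dist x x₁ ≤ dist x z + dist z x₁ := dist_triangle _ _ _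
      linarith
    rw [ha₀app, min_eq_right hinf, sub_self]
  have hg₀inf : Filter.Tendsto (fun x => a₀ x - R'') (Filter.cocompact X) (nhds 0) := by
    have hev : ∀ᶠ x in Filter.cocompact X, (fun x => a₀ x - R'') x = (fun _ => (0:ℝ)) x := by
      rw [Filter.eventually_iff, Filter.mem_cocompact]
      exact ⟨Metric.closedBall x₁ (m + R''), isCompact_closedBall _ _, fun x hx => hz x hx⟩
    exact Filter.Tendsto.congr' (Filter.EventuallyEq.symm hev) tendsto_const_nhds
  set g₀ : C₀(X, ℝ) := ⟨⟨fun x => a₀ x - R'',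
    (a₀.continuous.sub continuous_const)⟩, hg₀inf⟩ with hg₀_def
  have hg₀app : ∀ x, g₀ x = a₀ x - R'' := fun _ => rfl
  have hLipa₀ : LipschitzWith 1 ⇑a₀ := by
    have h1 : LipschitzWith 1 (fun x => min (Metric.infDist x K) R'') :=
      (Metric.lipschitz_infDist_pt K).min_const R''
    exact h1
  have hLipg₀ : LipschitzWith 1 ⇑g₀ := by
    refine LipschitzWith.of_dist_le_mul fun x y => ?_
    have h2 : dist (g₀ x) (g₀ y) = dist (a₀ x) (a₀ y) := by
      rw [hg₀app, hg₀app]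
      exact dist_sub_right _ _ _
    rw [h2]
    simpa using hLipa₀.dist_le_mul x y
  -- apply the spectral hypothesis
  have hP := hspec g₀ R'' hLipg₀
  have haeq : ρ (toComplexBCF g₀.toBCF) + ((R'':ℝ) : ℂ) • 1 = ρ (toComplexBCF a₀) := by
    have h1 : toComplexBCF a₀ = toComplexBCF g₀.toBCF + ((R'':ℝ) : ℂ) • 1 := by
      ext x
      simp only [toComplexBCF_apply, BoundedContinuousFunction.coe_add, Pi.add_apply,
        BoundedContinuousFunction.coe_smul, Pi.smul_apply, BoundedContinuousFunction.coe_one,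
        Pi.one_apply, smul_eq_mul, mul_one, ZeroAtInftyContinuousMap.toBCF_apply, hg₀app]
      push_cast
      ring
    rw [h1, map_add, map_smul, map_one]
  rw [haeq] at hP
  set A := ρ (toComplexBCF a₀) with hA_def
  -- absorption on the left
  have habs1 : ρ k * specProjIic A 0 = ρ k := by
    refine rho_mul_specProjIic_self ρ a₀ k fun x hx => ?_
    rw [ha₀app, Metric.infDist_zero_of_mem hx, min_eq_left hR''pos.le]
  -- absorption on the right
  have habs2 : specProjIic A R * ρ u = 0 := by
    refine specProjIic_mul_rho_zero ρ a₀ u hRR'' fun y hy => ?_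
    have hinf : R'' ≤ Metric.infDist y K := by
      refine le_infDist_of ⟨x₁, hx₁⟩ fun z hz => ?_
      have h1 : cE ≤ edist z y := le_trans hc2.le (setEDist_le_edist hz hy)
      rw [edist_dist] at h1
      have h2 : R'' ≤ dist z y := by
        have := ENNReal.toReal_mono ENNReal.ofReal_ne_top h1
        rwa [ENNReal.toReal_ofReal dist_nonneg, ← hR''_def] at this
      rwa [dist_comm]
    rw [ha₀app]
    exact le_min hinf le_rfl
  have habs2' : specProjIoi A R * ρ u = ρ u := by
    show (1 - specProjIic A R) * ρ u = ρ u
    rw [sub_mul, one_mul, habs2, sub_zero]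
  calc ρ k * T * ρ u = (ρ k * specProjIic A 0) * T * (specProjIoi A R * ρ u) := by
        rw [habs1, habs2']
  _ = ρ k * (specProjIic A 0 * T * specProjIoi A R) * ρ u := by noncomm_ring
  _ = 0 := by rw [hP, mul_zero, zero_mul]

end AuxCore
section AuxReduce

variable {X : Type*} [MetricSpace X] [ProperSpace X]
variable {H : Type*} [NormedAddCommGroup H] [InnerProductSpace ℂ H] [CompleteSpace H]
variable (ρ : (X →ᵇ ℂ) →⋆ₐ[ℂ] (H →L[ℂ] H))

lemma hasClass_of_hasSpec (hρn : RepNondegenerate ρ) {T : H →L[ℂ] H} {R : ℝ} (hR : 0 ≤ R)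
    (hspec : HasSpecPropLE_Lip ρ T R) : HasClassPropLE ρ T R := by
  intro f g hdist
  rcases isEmpty_or_nonempty X with hX | hX
  · have hf : f = 0 := by ext x; exact (IsEmpty.false x).elim
    rw [hf, map_zero, zero_mul, zero_mul]
  obtain ⟨x₀⟩ := hX
  -- Step 1: the statement holds with `f` replaced by `k * f` for any `k ∈ C₀`.
  have step1 : ∀ k : C₀(X, ℂ), ρ (k.toBCF * f) * T * ρ g = 0 := by
    intro k
    set S := ρ (k.toBCF * f) * T * ρ g with hS_def
    set C : ℝ := ‖f‖ * (‖T‖ * ‖ρ g‖) with hC_def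
    have hC : 0 ≤ C := by positivity
    have hbound : ∀ δ : ℝ, 0 < δ → ‖S‖ ≤ δ * C := by
      intro δ hδ
      have hcc := Metric.tendsto_nhds.mp (zero_at_infty k) δ hδ
      rw [Filter.eventually_iff, Filter.mem_cocompact] at hcc
      obtain ⟨cK, hcK, hsub⟩ := hcc
      obtain ⟨m, hm⟩ := hcK.isBounded.subset_closedBall x₀
      set b : X →ᵇ ℂ := toComplexBCF (bumpBCF x₀ (m + 1)) with hb_def
      have hone : ∀ x ∈ cK, b x = 1 := by
        intro x hx
        rw [hb_def, toComplexBCF_apply,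
          bumpBCF_eq_one (by simpa using Metric.mem_closedBall.mp (hm hx))]
        norm_num
      have hzero : ρ (b * k.toBCF * f) * T * ρ g = 0 := by
        apply core_spec_to_class ρ hspec hR
        · refine (Metric.isBounded_closedBall (x := x₀) (r := m + 1)).subset ?_
          calc tsupport ⇑(b * k.toBCF * f) ⊆ tsupport ⇑(b * k.toBCF) := by
                rw [BoundedContinuousFunction.coe_mul]
                exact tsupport_mul_subset_left
          _ ⊆ tsupport ⇑b := by
              rw [BoundedContinuousFunction.coe_mul]
              exact tsupport_mul_subset_left
          _ ⊆ Metric.closedBall x₀ (m + 1) := by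
              rw [hb_def]
              intro x hx
              have hx' : x ∈ tsupport ⇑(bumpBCF x₀ (m+1)) := by
                have hss : Function.support ⇑(toComplexBCF (bumpBCF x₀ (m+1))) ⊆
                    Function.support ⇑(bumpBCF x₀ (m+1)) := by
                  intro y hy
                  rw [Function.mem_support] at hy ⊢
                  intro hcon
                  exact hy (by rw [toComplexBCF_apply, hcon]; norm_num)
                exact closure_mono hss hx
              exact tsupport_bumpBCF_subset x₀ (m+1) hx'
        · calc ENNReal.ofReal R < setEDist (tsupport ⇑f) (tsupport ⇑g) := hdist
          _ ≤ setEDist (tsupport ⇑(b * k.toBCF * f)) (tsupport ⇑g) := by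
              refine setEDist_anti ?_
              rw [BoundedContinuousFunction.coe_mul]
              exact tsupport_mul_subset_right
      have hsmall : ‖k.toBCF * (1 - b)‖ ≤ δ := by
        rw [BoundedContinuousFunction.norm_le hδ.le]
        intro x
        rw [BoundedContinuousFunction.mul_apply]
        by_cases hx : x ∈ cK
        · rw [BoundedContinuousFunction.sub_apply, BoundedContinuousFunction.coe_one, Pi.one_apply,
            hone x hx, sub_self, mul_zero, norm_zero]
          exact hδ.le
        · have h1 : ‖k.toBCF x‖ ≤ δ := by
            have := hsub (by exact hx : x ∈ cKᶜ)
            rw [Set.mem_setOf_eq, dist_zero_right] at this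
            exact this.le
          have h2 : ‖(1 - b) x‖ ≤ 1 := by
            rw [BoundedContinuousFunction.sub_apply, BoundedContinuousFunction.coe_one, Pi.one_apply,
              hb_def, toComplexBCF_apply]
            have h3 : (1:ℂ) - ((bumpBCF x₀ (m+1) x : ℝ) : ℂ) =
                (((1 - bumpBCF x₀ (m+1) x : ℝ)) : ℂ) := by push_cast; ring
            rw [h3, Complex.norm_real, Real.norm_eq_abs, abs_le]
            constructor
            · linarith [bumpBCF_le_one x₀ (m+1) x]
            · linarith [bumpBCF_nonneg x₀ (m+1) x]
          calc ‖k.toBCF x * (1 - b) x‖ = ‖k.toBCF x‖ * ‖(1 - b) x‖ := norm_mul _ _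
          _ ≤ δ * 1 := mul_le_mul h1 h2 (norm_nonneg _) hδ.le
          _ = δ := mul_one δ
      have hsplit : k.toBCF * f = b * k.toBCF * f + k.toBCF * (1 - b) * f := by ring
      have hS2 : S = ρ (k.toBCF * (1 - b) * f) * T * ρ g := by
        rw [hS_def, hsplit, map_add, add_mul, add_mul, hzero, zero_add]
      have hnorm1 : ‖ρ (k.toBCF * (1 - b) * f)‖ ≤ δ * ‖f‖ := by
        calc ‖ρ (k.toBCF * (1 - b) * f)‖ ≤ ‖k.toBCF * (1 - b) * f‖ := norm_rho_le ρ _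
        _ ≤ ‖k.toBCF * (1 - b)‖ * ‖f‖ := norm_mul_le _ _
        _ ≤ δ * ‖f‖ := mul_le_mul_of_nonneg_right hsmall (norm_nonneg _)
      calc ‖S‖ = ‖ρ (k.toBCF * (1 - b) * f) * T * ρ g‖ := by rw [hS2]
      _ ≤ ‖ρ (k.toBCF * (1 - b) * f) * T‖ * ‖ρ g‖ := norm_mul_le _ _
      _ ≤ ‖ρ (k.toBCF * (1 - b) * f)‖ * ‖T‖ * ‖ρ g‖ :=
          mul_le_mul_of_nonneg_right (norm_mul_le _ _) (norm_nonneg _)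
      _ ≤ (δ * ‖f‖) * ‖T‖ * ‖ρ g‖ := by
          have := mul_le_mul_of_nonneg_right hnorm1 (norm_nonneg T)
          exact mul_le_mul_of_nonneg_right this (norm_nonneg _)
      _ = δ * C := by rw [hC_def]; ring
    by_contra hne
    have hpos : 0 < ‖S‖ := norm_pos_iff.mpr hne
    have hkey := hbound (‖S‖ / (2 * (C + 1))) (by positivity)
    have h1 : ‖S‖ / (2 * (C + 1)) * C ≤ ‖S‖ / (2 * (C + 1)) * (C + 1) := by
      have : (0:ℝ) ≤ ‖S‖ / (2 * (C + 1)) := by positivity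
      nlinarith
    have h2 : ‖S‖ / (2 * (C + 1)) * (C + 1) = ‖S‖ / 2 := by
      field_simp
    linarith
  -- Step 2: conclude by nondegeneracy
  ext v
  rw [ContinuousLinearMap.zero_apply]
  set w : H := (ρ f * T * ρ g) v with hw_def
  have horth : ∀ (q : C₀(X, ℂ)) (ξ : H), (inner ℂ (ρ q.toBCF ξ) w : ℂ) = 0 := by
    intro q ξ
    have h1 : (inner ℂ ξ ((ContinuousLinearMap.adjoint (ρ q.toBCF)) w) : ℂ) =
        inner ℂ (ρ q.toBCF ξ) w := ContinuousLinearMap.adjoint_inner_right _ ξ w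
    have hadj : ContinuousLinearMap.adjoint (ρ q.toBCF) = ρ (star (q.toBCF)) := by
      rw [map_star]
      rfl
    have h2 : ρ (star q.toBCF) w = 0 := by
      have h3 : ρ (star q.toBCF) * (ρ f * T * ρ g) = ρ (star q.toBCF * f) * T * ρ g := by
        rw [map_mul]
        noncomm_ring
      have h4 : star q.toBCF = (star q).toBCF := rfl
      have h5 : ρ (star q.toBCF * f) * T * ρ g = 0 := by
        rw [h4]
        exact step1 (star q)
      calc ρ (star q.toBCF) w = (ρ (star q.toBCF) * (ρ f * T * ρ g)) v := rfl
      _ = 0 := by rw [h3, h5]; rfl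
    rw [← h1, hadj, h2, inner_zero_right]
  have hle : Submodule.span ℂ {η : H | ∃ (q : C₀(X, ℂ)) (ξ : H), η = ρ q.toBCF ξ} ≤
      (ℂ ∙ w)ᗮ := by
    rw [Submodule.span_le]
    rintro η ⟨q, ξ, rfl⟩
    rw [SetLike.mem_coe, Submodule.mem_orthogonal]
    intro y hy
    obtain ⟨c, rfl⟩ := Submodule.mem_span_singleton.mp hy
    rw [inner_smul_left]
    have h6 : (inner ℂ w (ρ q.toBCF ξ) : ℂ) = 0 := by
      rw [inner_eq_zero_symm]
      exact horth q ξ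
    rw [h6, mul_zero]
  have htop : (Submodule.span ℂ
      {η : H | ∃ (q : C₀(X, ℂ)) (ξ : H), η = ρ q.toBCF ξ}).topologicalClosure ≤ (ℂ ∙ w)ᗮ :=
    Submodule.topologicalClosure_minimal _ hle (Submodule.isClosed_orthogonal _)
  have hρn' : (Submodule.span ℂ
      {η : H | ∃ (q : C₀(X, ℂ)) (ξ : H), η = ρ q.toBCF ξ}).topologicalClosure = ⊤ := hρn
  rw [hρn'] at htop
  have hww : w ∈ (ℂ ∙ w)ᗮ := htop Submodule.mem_top
  have h7 := (Submodule.mem_orthogonal _ w).mp hww w (Submodule.mem_span_singleton_self w)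
  exact inner_self_eq_zero.mp h7

end AuxReduce
/-- The spectral propagation with respect to `(C₀(X), L_d)` equals the
classical propagation, and hence the spectral Roe algebra coincides with the classical Roe
algebra `C*(X)`. -/
theorem specPropagation_eq_classPropagation
    (hρf : RepFaithful ρ) (hρn : RepNondegenerate ρ) :
    (∀ T : H →L[ℂ] H, specPropagation_Lip ρ T = classPropagation ρ T) ∧
    closure {T : H →L[ℂ] H | LocallyCompactOp ρ T ∧ ∃ R : ℝ, 0 ≤ R ∧ HasSpecPropLE_Lip ρ T R} =
      closure {T : H →L[ℂ] H | LocallyCompactOp ρ T ∧ ∃ R : ℝ, 0 ≤ R ∧ HasClassPropLE ρ T R} := by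
  constructor
  · intro T
    simp only [specPropagation_Lip, classPropagation]
    refine le_antisymm ?_ ?_
    · -- spectral propagation ≤ classical propagation
      refine le_iInf fun R => le_iInf fun hcl => ?_
      refine ENNReal.le_of_forall_pos_le_add fun ε hε _ => ?_
      have hlt : ((R : ℝ)) < (((R + ε : ℝ≥0) : ℝ)) := by
        push_cast
        exact lt_add_of_pos_right _ (by exact_mod_cast hε)
      have hsp : HasSpecPropLE_Lip ρ T ((R + ε : ℝ≥0) : ℝ) :=
        hasSpec_of_hasClass ρ R.coe_nonneg hlt hcl
      calc (⨅ (R' : ℝ≥0) (_ : HasSpecPropLE_Lip ρ T R'), (R' : ℝ≥0∞))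
          ≤ ((R + ε : ℝ≥0) : ℝ≥0∞) := iInf₂_le (R + ε) hsp
      _ = (R : ℝ≥0∞) + (ε : ℝ≥0∞) := by push_cast; rfl
    · refine le_iInf fun R => le_iInf fun hsp => ?_
      exact iInf₂_le R (hasClass_of_hasSpec ρ hρn R.coe_nonneg hsp)
  · have hseteq : {T : H →L[ℂ] H | LocallyCompactOp ρ T ∧ ∃ R : ℝ, 0 ≤ R ∧ HasSpecPropLE_Lip ρ T R}
        = {T : H →L[ℂ] H | LocallyCompactOp ρ T ∧ ∃ R : ℝ, 0 ≤ R ∧ HasClassPropLE ρ T R} := by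
      ext T
      simp only [Set.mem_setOf_eq]
      refine and_congr_right fun _ => ⟨?_, ?_⟩
      · rintro ⟨R, hR0, hsp⟩
        exact ⟨R, hR0, hasClass_of_hasSpec ρ hρn hR0 hsp⟩
      · rintro ⟨R, hR0, hcl⟩
        exact ⟨R + 1, by linarith, hasSpec_of_hasClass ρ hR0 (by linarith) hcl⟩
    rw [hseteq]

end
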